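/- Let S be a similarity of ℝ³ which is a composition of a homothety with fixed point c and a rotation around a line l containing c, and let P be a plane containing l. Let B(a,r) be a closed ball with center a and radius r that is disjoint from P (i.e. dist(a,P) > r). Then for all x, y in B(a,r), ‖S(x) − x‖ / ‖S(y) − y‖ ≤ (dist(a,P) + r)/(dist(a,P) − r). -/

import Mathlib

open Metric
open scoped RealInnerProductSpace

set_option maxHeartbeats 1000000
noncomputable section

lemma rot_aux (u : EuclideanSpace ℝ (Fin 3)) (hu : ‖u‖ = 1)
    (R : EuclideanSpace ℝ (Fin 3) ≃ₗᵢ[ℝ] EuclideanSpace ℝ (Fin 3))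
    (hdet : LinearMap.det (R.toLinearEquiv : EuclideanSpace ℝ (Fin 3) →ₗ[ℝ] EuclideanSpace ℝ (Fin 3)) = 1)
    (haxis : R u = u) :
    ∃ α : ℝ, |α| ≤ 1 ∧ ∀ p : EuclideanSpace ℝ (Fin 3), ⟪u, p⟫ = 0 → ⟪R p, p⟫ = α * ‖p‖ ^ 2 := by
  -- extend u to an orthonormal basis
  have hcard : Module.finrank ℝ (EuclideanSpace ℝ (Fin 3)) = Fintype.card (Fin 3) := by
    simp [finrank_euclideanSpace_fin]
  have horth : Orthonormal ℝ (Set.restrict {(0 : Fin 3)} (fun _ => u)) := by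
    rw [orthonormal_iff_ite]
    intro i j
    have hij : i = j := Subsingleton.elim i j
    subst hij
    simp only [Set.restrict_apply, if_pos rfl]
    rw [real_inner_self_eq_norm_sq]
    show ‖u‖ ^ 2 = _
    rw [hu]
    norm_num
  obtain ⟨b, hb0⟩ := horth.exists_orthonormalBasis_extension_of_card_eq hcard
  have hb0 : b 0 = u := hb0 0 rfl
  have hbo := b.orthonormal
  rw [orthonormal_iff_ite] at hbo
  set α : ℝ := ⟪b 1, R (b 1)⟫ with hα
  set β : ℝ := ⟪b 2, R (b 1)⟫ with hβ
  set γ : ℝ := ⟪b 1, R (b 2)⟫ with hγ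
  set δ : ℝ := ⟪b 2, R (b 2)⟫ with hδ
  have hfix : R (b 0) = b 0 := by rw [hb0, haxis]
  have key : ∀ s t s' t' : ℝ, ⟪s • b 1 + t • b 2, s' • b 1 + t' • b 2⟫ = s * s' + t * t' := by
    intro s t s' t'
    simp only [inner_add_left, inner_add_right, real_inner_smul_left, real_inner_smul_right, hbo]
    norm_num
    rw [if_neg (by decide), if_neg (by decide)]
    ring
  have hu1 : ⟪b 0, R (b 1)⟫ = 0 := by
    rw [← hfix, R.inner_map_map]
    simpa using hbo 0 1
  have hu2 : ⟪b 0, R (b 2)⟫ = 0 := by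
    rw [← hfix, R.inner_map_map]
    simpa using hbo 0 2
  have hRe1 : R (b 1) = α • b 1 + β • b 2 := by
    have h := b.sum_repr' (R (b 1))
    rw [Fin.sum_univ_three] at h
    rw [← h, hu1, zero_smul, zero_add]
  have hRe2 : R (b 2) = γ • b 1 + δ • b 2 := by
    have h := b.sum_repr' (R (b 2))
    rw [Fin.sum_univ_three] at h
    rw [← h, hu2, zero_smul, zero_add]
  have h1 : α * α + β * β = 1 := by
    have h := R.inner_map_map (b 1) (b 1)
    rw [hRe1, key] at h
    have := hbo 1 1
    rw [if_pos rfl] at this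
    rw [this] at h
    exact h
  have h2 : α * γ + β * δ = 0 := by
    have h := R.inner_map_map (b 1) (b 2)
    rw [hRe1, hRe2, key] at h
    have e12 := hbo 1 2
    rw [if_neg (by decide)] at e12
    rw [e12] at h
    exact h
  -- determinant computation
  have h3 : α * δ - β * γ = 1 := by
    have hM := LinearMap.det_toMatrix b.toBasis
      (R.toLinearEquiv : EuclideanSpace ℝ (Fin 3) →ₗ[ℝ] EuclideanSpace ℝ (Fin 3))
    rw [hdet] at hM
    have hent : ∀ i j : Fin 3, (LinearMap.toMatrix b.toBasis b.toBasis
        (R.toLinearEquiv : EuclideanSpace ℝ (Fin 3) →ₗ[ℝ] EuclideanSpace ℝ (Fin 3))) i j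
        = ⟪b i, R (b j)⟫ := by
      intro i j
      rw [LinearMap.toMatrix_apply, OrthonormalBasis.coe_toBasis,
        OrthonormalBasis.coe_toBasis_repr_apply, OrthonormalBasis.repr_apply_apply,
        real_inner_comm]
      simp [mul_comm]
      exact real_inner_comm _ _
    rw [Matrix.det_fin_three] at hM
    simp only [hent] at hM
    rw [hfix] at hM
    have e00 := hbo 0 0
    have e10 := hbo 1 0
    have e20 := hbo 2 0
    rw [if_pos rfl] at e00
    rw [if_neg (by decide)] at e10
    rw [if_neg (by decide)] at e20
    rw [e00, e10, e20, hu1, hu2] at hM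
    rw [← hα, ← hβ, ← hγ, ← hδ] at hM
    linarith [hM]
  have hgb : γ = -β := by linear_combination (-γ) * h1 + (-β) * h3 + α * h2
  have hda : δ = α := by linear_combination (-δ) * h1 + α * h3 + β * h2
  refine ⟨α, ?_, ?_⟩
  · rw [abs_le]
    constructor <;> nlinarith [h1, sq_nonneg β, sq_nonneg (α+1), sq_nonneg (α-1)]
  · intro p hp
    have hp0 : ⟪b 0, p⟫ = 0 := by rw [hb0]; exact hp
    have hrep := b.sum_repr' p
    rw [Fin.sum_univ_three, hp0, zero_smul, zero_add] at hrep
    set s : ℝ := ⟪b 1, p⟫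
    set t : ℝ := ⟪b 2, p⟫
    have hnorm : ‖p‖ ^ 2 = s * s + t * t := by
      rw [← real_inner_self_eq_norm_sq, ← hrep, key]
    have hRp : R p = (s * α - t * β) • b 1 + (s * β + t * α) • b 2 := by
      rw [← hrep]
      rw [map_add, map_smul, map_smul, hRe1, hRe2, hgb, hda]
      module
    rw [hRp, hnorm, ← hrep, key]
    ring

set_option maxHeartbeats 1000000 in
theorem stmt_0
    (c u : EuclideanSpace ℝ (Fin 3)) (hu : ‖u‖ = 1)
    (l : ℝ) (hl : 0 < l)
    (R : EuclideanSpace ℝ (Fin 3) ≃ₗᵢ[ℝ] EuclideanSpace ℝ (Fin 3))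
    (hdet : LinearMap.det (R.toLinearEquiv : EuclideanSpace ℝ (Fin 3) →ₗ[ℝ] EuclideanSpace ℝ (Fin 3)) = 1)
    (haxis : R u = u)
    (S : EuclideanSpace ℝ (Fin 3) → EuclideanSpace ℝ (Fin 3))
    (hS : ∀ x, S x = c + l • R (x - c))
    (P : AffineSubspace ℝ (EuclideanSpace ℝ (Fin 3)))
    (hcP : c ∈ P) (huP : u ∈ P.direction)
    (hplane : Module.finrank ℝ P.direction = 2)
    (a : EuclideanSpace ℝ (Fin 3)) (r : ℝ) (hr : 0 ≤ r)
    (hdisj : r < Metric.infDist a (P : Set (EuclideanSpace ℝ (Fin 3))))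
    (x y : EuclideanSpace ℝ (Fin 3))
    (hx : x ∈ closedBall a r) (hy : y ∈ closedBall a r) :
    ‖S x - x‖ / ‖S y - y‖ ≤
      (Metric.infDist a (P : Set (EuclideanSpace ℝ (Fin 3))) + r) /
        (Metric.infDist a (P : Set (EuclideanSpace ℝ (Fin 3))) - r) := by
  obtain ⟨α, hα1, hαp⟩ := rot_aux u hu R hdet haxis
  have hα1' : α ≤ 1 := (abs_le.1 hα1).2
  set d : ℝ := Metric.infDist a (P : Set (EuclideanSpace ℝ (Fin 3))) with hd
  have hd0 : 0 < d := lt_of_le_of_lt hr hdisj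
  set K : ℝ := Real.sqrt (l ^ 2 - 2 * l * α + 1) with hKdef
  have hKarg : 0 ≤ l ^ 2 - 2 * l * α + 1 := by
    nlinarith [sq_nonneg (l - 1), mul_nonneg hl.le (sub_nonneg.2 hα1')]
  have hK2 : K ^ 2 = l ^ 2 - 2 * l * α + 1 := Real.sq_sqrt hKarg
  have hK0 : 0 ≤ K := Real.sqrt_nonneg _
  have hlK : (l - 1) ^ 2 ≤ K ^ 2 := by rw [hK2]; nlinarith
  -- the squared norm formula
  have gsq : ∀ v : EuclideanSpace ℝ (Fin 3),
      ‖l • R v - v‖ ^ 2 = (l - 1) ^ 2 * ⟪u, v⟫ ^ 2 + K ^ 2 * ‖v - ⟪u, v⟫ • u‖ ^ 2 := by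
    intro v
    set t : ℝ := ⟪u, v⟫ with ht
    set p : EuclideanSpace ℝ (Fin 3) := v - t • u with hp
    have hup : ⟪u, p⟫ = 0 := by
      rw [hp, inner_sub_right, real_inner_smul_right, real_inner_self_eq_norm_sq, hu]
      ring
    have hRup : ⟪u, R p⟫ = 0 := by
      calc ⟪u, R p⟫ = ⟪R u, R p⟫ := by rw [haxis]
        _ = ⟪u, p⟫ := R.inner_map_map u p
        _ = 0 := hup
    have hsplit : l • R v - v = ((l - 1) * t) • u + (l • R p - p) := by
      have hv : v = t • u + p := by rw [hp]; abel
      have hRv : R v = t • u + R p := by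
        conv_lhs => rw [hv]
        rw [map_add, map_smul, haxis]
      rw [hRv]
      conv_lhs => rw [hv]
      rw [smul_add, smul_smul]
      module
    have horth : ⟪((l - 1) * t) • u, l • R p - p⟫ = 0 := by
      rw [real_inner_smul_left, inner_sub_right, real_inner_smul_right, hRup, hup]
      ring
    have hBsq : ‖l • R p - p‖ ^ 2 = K ^ 2 * ‖p‖ ^ 2 := by
      rw [norm_sub_sq_real, norm_smul, real_inner_smul_left,
        hαp p hup, R.norm_map, hK2]
      simp [abs_of_pos hl]
      ring
    rw [hsplit, norm_add_sq_real, horth, norm_smul, hBsq, hu, mul_one, Real.norm_eq_abs, sq_abs]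
    ring
  have pyth : ∀ v : EuclideanSpace ℝ (Fin 3), ‖v‖ ^ 2 = ⟪u, v⟫ ^ 2 + ‖v - ⟪u, v⟫ • u‖ ^ 2 := by
    intro v
    have hup : ⟪u, v - ⟪u, v⟫ • u⟫ = 0 := by
      rw [inner_sub_right, real_inner_smul_right, real_inner_self_eq_norm_sq, hu]
      ring
    have hv : v = ⟪u, v⟫ • u + (v - ⟪u, v⟫ • u) := by abel
    conv_lhs => rw [hv]
    rw [norm_add_sq_real, real_inner_smul_left, hup, norm_smul, hu, mul_one, Real.norm_eq_abs, sq_abs]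
    ring
  -- upper bound
  have gup : ∀ v : EuclideanSpace ℝ (Fin 3), ‖l • R v - v‖ ≤ K * ‖v‖ := by
    intro v
    have hsq : ‖l • R v - v‖ ^ 2 ≤ (K * ‖v‖) ^ 2 := by
      rw [gsq v, mul_pow, pyth v]
      nlinarith [sq_nonneg (⟪u, v⟫ : ℝ), sq_nonneg ‖v - ⟪u, v⟫ • u‖]
    calc ‖l • R v - v‖ = Real.sqrt (‖l • R v - v‖ ^ 2) :=
          (Real.sqrt_sq (norm_nonneg _)).symm
      _ ≤ Real.sqrt ((K * ‖v‖) ^ 2) := Real.sqrt_le_sqrt hsq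
      _ = K * ‖v‖ := Real.sqrt_sq (by positivity)
  -- construct the unit normal n
  obtain ⟨w, hwP, hw0⟩ : ∃ w ∈ P.directionᗮ, w ≠ 0 := by
    have hfr : Module.finrank ℝ (P.directionᗮ) = 1 := by
      have := Submodule.finrank_add_finrank_orthogonal (K := P.direction)
      rw [hplane, finrank_euclideanSpace_fin] at this
      omega
    have hne : P.directionᗮ ≠ ⊥ := by
      intro h
      rw [h, finrank_bot] at hfr
      omega
    exact Submodule.exists_mem_ne_zero_of_ne_bot hne
  set n : EuclideanSpace ℝ (Fin 3) := ‖w‖⁻¹ • w with hn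
  have hnP : n ∈ P.directionᗮ := Submodule.smul_mem _ _ hwP
  have hn1 : ‖n‖ = 1 := norm_smul_inv_norm hw0
  have hun : ⟪u, n⟫ = 0 := hnP u huP
  -- lower bound
  have glow : ∀ v : EuclideanSpace ℝ (Fin 3), K * |⟪n, v⟫| ≤ ‖l • R v - v‖ := by
    intro v
    have hnu : (⟪n, u⟫ : ℝ) = 0 := by rw [real_inner_comm]; exact hun
    have hnv : ⟪n, v⟫ = ⟪n, v - ⟪u, v⟫ • u⟫ := by
      rw [inner_sub_right, real_inner_smul_right, hnu]
      ring
    have hcs : |⟪n, v - ⟪u, v⟫ • u⟫| ≤ ‖v - ⟪u, v⟫ • u‖ := by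
      calc |⟪n, v - ⟪u, v⟫ • u⟫| ≤ ‖n‖ * ‖v - ⟪u, v⟫ • u‖ := abs_real_inner_le_norm _ _
        _ = ‖v - ⟪u, v⟫ • u‖ := by rw [hn1, one_mul]
    have h2 : (⟪n, v - ⟪u, v⟫ • u⟫ : ℝ) ^ 2 ≤ ‖v - ⟪u, v⟫ • u‖ ^ 2 := by
      rw [← sq_abs]
      exact pow_le_pow_left₀ (abs_nonneg _) hcs 2
    have hsq : (K * |⟪n, v⟫|) ^ 2 ≤ ‖l • R v - v‖ ^ 2 := by
      rw [gsq v, mul_pow, hnv, sq_abs]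
      have h3 := mul_le_mul_of_nonneg_left h2 (sq_nonneg K)
      have h4 : 0 ≤ (l - 1) ^ 2 * (⟪u, v⟫ : ℝ) ^ 2 :=
        mul_nonneg (sq_nonneg _) (sq_nonneg _)
      linarith
    calc K * |⟪n, v⟫| = Real.sqrt ((K * |⟪n, v⟫|) ^ 2) :=
          (Real.sqrt_sq (by positivity)).symm
      _ ≤ Real.sqrt (‖l • R v - v‖ ^ 2) := Real.sqrt_le_sqrt hsq
      _ = ‖l • R v - v‖ := Real.sqrt_sq (norm_nonneg _)
  -- infDist bound
  have hdle : d ≤ |⟪n, a - c⟫| := by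
    set q : EuclideanSpace ℝ (Fin 3) := (a - c) - ⟪n, a - c⟫ • n with hq
    have hdir : P.direction = (ℝ ∙ n)ᗮ := by
      refine Submodule.eq_of_le_of_finrank_eq ?_ ?_
      · intro v hv
        rw [Submodule.mem_orthogonal_singleton_iff_inner_left]
        exact hnP v hv
      · have h1 : Module.finrank ℝ (ℝ ∙ n) = 1 := finrank_span_singleton (by
          intro h; rw [h, norm_zero] at hn1; norm_num at hn1)
        have := Submodule.finrank_add_finrank_orthogonal (K := (ℝ ∙ n))
        rw [h1, finrank_euclideanSpace_fin] at this
        rw [hplane]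
        omega
    have hqdir : q ∈ P.direction := by
      rw [hdir, Submodule.mem_orthogonal_singleton_iff_inner_right, hq,
        inner_sub_right, real_inner_smul_right, real_inner_self_eq_norm_sq, hn1]
      ring
    have hzP : q +ᵥ c ∈ P := AffineSubspace.vadd_mem_of_mem_direction hqdir hcP
    calc d ≤ dist a (q +ᵥ c) := Metric.infDist_le_dist_of_mem hzP
      _ = ‖a - (q + c)‖ := by rw [dist_eq_norm]; rfl
      _ = ‖⟪n, a - c⟫ • n‖ := by rw [hq]; congr 1; abel
      _ = |⟪n, a - c⟫| := by rw [norm_smul, hn1, mul_one, Real.norm_eq_abs]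
  set F : ℝ := ‖l • R (a - c) - (a - c)‖ with hF
  have hFKd : K * d ≤ F := by
    calc K * d ≤ K * |⟪n, a - c⟫| := by
          exact mul_le_mul_of_nonneg_left hdle hK0
      _ ≤ F := glow (a - c)
  -- rewrite S
  have hSx : S x - x = l • R (x - c) - (x - c) := by rw [hS x]; abel
  have hSy : S y - y = l • R (y - c) - (y - c) := by rw [hS y]; abel
  have hxa : ‖x - a‖ ≤ r := by
    rw [← dist_eq_norm]; exact Metric.mem_closedBall.1 hx
  have hya : ‖a - y‖ ≤ r := by
    rw [← dist_eq_norm, dist_comm]; exact Metric.mem_closedBall.1 hy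
  have hgx : ‖S x - x‖ ≤ F + K * r := by
    rw [hSx]
    have hdecomp : l • R (x - c) - (x - c)
        = (l • R (a - c) - (a - c)) + (l • R (x - a) - (x - a)) := by
      have : R (x - c) = R (a - c) + R (x - a) := by
        rw [← map_add]; congr 1; abel
      rw [this, smul_add]; abel
    rw [hdecomp]
    calc ‖(l • R (a - c) - (a - c)) + (l • R (x - a) - (x - a))‖
        ≤ F + ‖l • R (x - a) - (x - a)‖ := norm_add_le _ _
      _ ≤ F + K * ‖x - a‖ := by linarith [gup (x - a)]
      _ ≤ F + K * r := by nlinarith [gup (x - a), norm_nonneg (x - a)]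
  have hgy : F - K * r ≤ ‖S y - y‖ := by
    rw [hSy]
    have hdecomp : l • R (a - c) - (a - c)
        = (l • R (y - c) - (y - c)) + (l • R (a - y) - (a - y)) := by
      have : R (a - c) = R (y - c) + R (a - y) := by
        rw [← map_add]; congr 1; abel
      rw [this, smul_add]; abel
    have : F ≤ ‖l • R (y - c) - (y - c)‖ + K * r := by
      calc F = ‖(l • R (y - c) - (y - c)) + (l • R (a - y) - (a - y))‖ := by
            rw [hF, hdecomp]
        _ ≤ ‖l • R (y - c) - (y - c)‖ + ‖l • R (a - y) - (a - y)‖ := norm_add_le _ _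
        _ ≤ ‖l • R (y - c) - (y - c)‖ + K * r := by
            nlinarith [gup (a - y), norm_nonneg (a - y)]
    linarith
  rcases eq_or_lt_of_le hK0 with hK | hK
  · -- K = 0 : S x = x
    have hx0 : ‖S x - x‖ = 0 := by
      have h := gup (x - c)
      have := norm_nonneg (S x - x)
      rw [← hSx] at h
      nlinarith [norm_nonneg (x - c)]
    rw [hx0, zero_div]
    apply div_nonneg <;> linarith
  · -- K > 0
    have hFr : 0 < F - K * r := by nlinarith
    have hy0 : 0 < ‖S y - y‖ := lt_of_lt_of_le hFr hgy
    rw [div_le_div_iff₀ hy0 (by linarith)]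
    nlinarith [norm_nonneg (S x - x)]
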